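/- arXiv:1703.06021 — 2 statements merged into one kernel-verified Lean document; each statement's English description precedes it below -/
import Mathlib

section
/- The swapping relation ≈_sw on choice-free global types, generated by the rule (p₁→q₁:⟨U₁⟩. p₂→q₂:⟨U₂⟩. G) ≈_sw (p₂→q₂:⟨U₂⟩. p₁→q₁:⟨U₁⟩. G) when {p₁,q₁} ∩ {p₂,q₂} = ∅, closed under congruence and equivalence, preserves projections: G ≈_sw G' implies G↾r = G'↾r for every participant r. -/
/-- Choice-free global types: `end` and value exchanges `p→q:⟨U⟩.G` with `p ≠ q`. -/
inductive GT (P U : Type*) : Type _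
  | gend : GT P U
  | comm (p q : P) (hpq : p ≠ q) (u : U) (g : GT P U) : GT P U

/-- Local types: `end`, send and receive prefixes. -/
inductive LTy (P U : Type*) : Type _
  | lend : LTy P U
  | send (q : P) (u : U) (t : LTy P U) : LTy P U
  | recv (p : P) (u : U) (t : LTy P U) : LTy P U

/-- Projection of a global type onto a participant. -/
def proj {P U : Type*} [DecidableEq P] : GT P U → P → LTy P U
  | .gend, _ => .lend
  | .comm p q _ u g, r =>
      if r = p then .send q u (proj g r)
      else if r = q then .recv p u (proj g r)
      else proj g r

/-- The swapping relation `≈_sw` on choice-free global types: the smallest equivalence,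
closed under the congruence rule, containing the swap of two consecutive exchanges
with disjoint participant pairs. -/
inductive SwapEq {P U : Type*} : GT P U → GT P U → Prop
  | swap (p₁ q₁ p₂ q₂ : P) (h₁ : p₁ ≠ q₁) (h₂ : p₂ ≠ q₂) (u₁ u₂ : U) (g : GT P U)
      (d₁ : p₁ ≠ p₂) (d₂ : p₁ ≠ q₂) (d₃ : q₁ ≠ p₂) (d₄ : q₁ ≠ q₂) :
      SwapEq (.comm p₁ q₁ h₁ u₁ (.comm p₂ q₂ h₂ u₂ g))
             (.comm p₂ q₂ h₂ u₂ (.comm p₁ q₁ h₁ u₁ g))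
  | congr (p q : P) (hpq : p ≠ q) (u : U) {g g' : GT P U} :
      SwapEq g g' → SwapEq (.comm p q hpq u g) (.comm p q hpq u g')
  | refl (g : GT P U) : SwapEq g g
  | symm {g g' : GT P U} : SwapEq g g' → SwapEq g' g
  | trans {g₁ g₂ g₃ : GT P U} : SwapEq g₁ g₂ → SwapEq g₂ g₃ → SwapEq g₁ g₃

/-- `≈_sw` preserves projections: `G ≈_sw G'` implies `G↾r = G'↾r` for every `r`. -/
theorem swapEq_preserves_proj {P U : Type*} [DecidableEq P] {g g' : GT P U}
    (h : SwapEq g g') (r : P) : proj g r = proj g' r := by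
  induction h with
  | swap p₁ q₁ p₂ q₂ h₁ h₂ u₁ u₂ g d₁ d₂ d₃ d₄ =>
      simp only [proj]
      rcases eq_or_ne r p₁ with rfl|h <;> rcases eq_or_ne r p₂ with rfl|h' <;>
        simp_all [proj] <;> split_ifs <;> simp_all
  | congr p q hpq u _ ih => simp [proj, ih]
  | refl g => rfl
  | symm _ ih => exact ih.symm
  | trans _ _ ih1 ih2 => exact ih1.trans ih2
end

section
/- Inversion of traces preserves causal equivalence: if ρ₁ ≍ ρ₂ then the inverse traces satisfy ρ̄₁ ≍ ρ̄₂, where the inverse of a trace is the reversed list of inverted transitions. -/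
universe u v

variable {C : Type u} {S : Type v}

/-- A trace (path) in a reversible LTS: a composable sequence of transitions
`step M η b M'` where `η` is the stamp and `b` the polarity (`true` = forward). -/
inductive RPath (step : C → Finset S → Bool → C → Prop) : C → C → Type (max u v)
  | nil (M : C) : RPath step M M
  | cons {M M' N : C} (η : Finset S) (b : Bool) (h : step M η b M') (ρ : RPath step M' N) :
      RPath step M N

/-- Composition of traces. -/
def RPath.append {step : C → Finset S → Bool → C → Prop} :
    ∀ {M K N : C}, RPath step M K → RPath step K N → RPath step M N
  | _, _, _, .nil _, ρ' => ρ'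
  | _, _, _, .cons η b h ρ, ρ' => .cons η b h (RPath.append ρ ρ')

/-- Length of a trace (number of transitions). -/
def RPath.length {step : C → Finset S → Bool → C → Prop} :
    ∀ {M N : C}, RPath step M N → ℕ
  | _, _, .nil _ => 0
  | _, _, .cons _ _ _ ρ => RPath.length ρ + 1

/-- All transitions of the trace have polarity `b` (`true` = forward-only,
`false` = backward-only). -/
def AllPol {step : C → Finset S → Bool → C → Prop} (b : Bool) :
    ∀ {M N : C}, RPath step M N → Prop
  | _, _, .nil _ => True
  | _, _, .cons _ b' _ ρ => b' = b ∧ AllPol b ρ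

/-- Causal equivalence `≍` on traces: the least equivalence, closed under composition
(here via the congruence rule `congr`), generated by swapping two adjacent concurrent
(disjointly-stamped) transitions and cancelling a transition with its inverse. -/
inductive CEq (step : C → Finset S → Bool → C → Prop) :
    ∀ {M N M' N' : C}, RPath step M N → RPath step M' N' → Prop
  | swap {M M₁ M₂ K N : C} {η₁ η₂ : Finset S} {b₁ b₂ : Bool}
      (hd : Disjoint η₁ η₂)
      (s₁ : step M η₁ b₁ M₁) (s₂ : step M₁ η₂ b₂ K)
      (s₁' : step M η₂ b₂ M₂) (s₂' : step M₂ η₁ b₁ K)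
      (ρ : RPath step K N) :
      CEq step (.cons η₁ b₁ s₁ (.cons η₂ b₂ s₂ ρ)) (.cons η₂ b₂ s₁' (.cons η₁ b₁ s₂' ρ))
  | cancel {M M₁ N : C} {η : Finset S} {b : Bool}
      (s : step M η b M₁) (s' : step M₁ η (!b) M) (ρ : RPath step M N) :
      CEq step (.cons η b s (.cons η (!b) s' ρ)) ρ
  | congr {M M' N : C} {η : Finset S} {b : Bool} (s : step M η b M')
      {ρ ρ' : RPath step M' N} : CEq step ρ ρ' → CEq step (.cons η b s ρ) (.cons η b s ρ')
  | refl {M N : C} (ρ : RPath step M N) : CEq step ρ ρ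
  | symm {M N M' N' : C} {ρ : RPath step M N} {ρ' : RPath step M' N'} :
      CEq step ρ ρ' → CEq step ρ' ρ
  | trans {M N M' N' M'' N'' : C} {ρ : RPath step M N} {ρ' : RPath step M' N'}
      {ρ'' : RPath step M'' N''} : CEq step ρ ρ' → CEq step ρ' ρ'' → CEq step ρ ρ''

/-- `IsInv ρ ρ̄` states that `ρ̄` is the inverse of the trace `ρ`: the reversed sequence
of the inverted transitions (same stamp, opposite polarity, swapped endpoints). -/
inductive IsInv (step : C → Finset S → Bool → C → Prop) :
    ∀ {M N : C}, RPath step M N → RPath step N M → Prop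
  | nil (M : C) : IsInv step (.nil M) (.nil M)
  | cons {M M' N : C} {η : Finset S} {b : Bool}
      (s : step M η b M') (s' : step M' η (!b) M)
      {ρ : RPath step M' N} {ρ' : RPath step N M'} :
      IsInv step ρ ρ' →
      IsInv step (.cons η b s ρ) (ρ'.append (.cons η (!b) s' (.nil M)))

section Aux

variable {step : C → Finset S → Bool → C → Prop}

theorem invStep (hLoop : ∀ (M : C) (η : Finset S) (N : C), step M η true N ↔ step N η false M)
    {A B : C} {η : Finset S} {b : Bool} (h : step A η b B) : step B η (!b) A := by
  cases b
  · exact (hLoop B η A).mpr h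
  · exact (hLoop A η B).mp h

theorem RPath.append_nil : ∀ {M N : C} (ρ : RPath step M N), ρ.append (.nil N) = ρ
  | _, _, .nil _ => rfl
  | _, _, .cons η b h ρ => by simp [RPath.append, RPath.append_nil ρ]

theorem RPath.append_assoc : ∀ {M K L N : C} (ρ : RPath step M K) (σ : RPath step K L)
    (τ : RPath step L N), (ρ.append σ).append τ = ρ.append (σ.append τ)
  | _, _, _, _, .nil _, _, _ => rfl
  | _, _, _, _, .cons η b h ρ, σ, τ => by
      simp [RPath.append, RPath.append_assoc ρ σ τ]

theorem isinv_unique : ∀ {M N : C} {ρ : RPath step M N} {σ σ' : RPath step N M},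
    IsInv step ρ σ → IsInv step ρ σ' → σ = σ' := by
  intro M N ρ σ σ' h h'
  induction h with
  | nil => cases h'; rfl
  | cons s s' hinv ih =>
      cases h' with
      | cons t t' hinv' => rw [ih hinv']

theorem exists_inv (hLoop : ∀ (M : C) (η : Finset S) (N : C), step M η true N ↔ step N η false M) :
    ∀ {M N : C} (ρ : RPath step M N), ∃ σ : RPath step N M, IsInv step ρ σ
  | _, _, .nil M => ⟨.nil M, .nil M⟩
  | _, _, .cons η b h ρ => by
      obtain ⟨σ, hσ⟩ := exists_inv hLoop ρ
      exact ⟨σ.append (.cons η (!b) (invStep hLoop h) (.nil _)), .cons h _ hσ⟩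

theorem ceq_endpoints {M N M' N' : C} {ρ : RPath step M N} {ρ' : RPath step M' N'}
    (h : CEq step ρ ρ') : M = M' ∧ N = N' := by
  induction h with
  | swap => exact ⟨rfl, rfl⟩
  | cancel => exact ⟨rfl, rfl⟩
  | congr _ _ ih => exact ⟨rfl, ih.2⟩
  | refl => exact ⟨rfl, rfl⟩
  | symm _ ih => exact ⟨ih.1.symm, ih.2.symm⟩
  | trans _ _ ih1 ih2 => exact ⟨ih1.1.trans ih2.1, ih1.2.trans ih2.2⟩

theorem ceq_append_left_aux : ∀ {M N P : C} (ρ : RPath step M N)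
    {τ τ' : RPath step N P},
    CEq step τ τ' → CEq step (ρ.append τ) (ρ.append τ')
  | _, _, _, .nil _, _, _, h => h
  | _, _, _, .cons η b s ρ, τ, τ', h =>
      show CEq step (.cons η b s (ρ.append τ)) (.cons η b s (ρ.append τ')) from
        .congr s (ceq_append_left_aux ρ h)

theorem ceq_append_left {M N P P' : C} (ρ : RPath step M N)
    {τ : RPath step N P} {τ' : RPath step N P'}
    (h : CEq step τ τ') : CEq step (ρ.append τ) (ρ.append τ') := by
  obtain ⟨-, hP⟩ := ceq_endpoints h
  subst hP
  exact ceq_append_left_aux ρ h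

theorem ceq_append {M N M' N' : C} {ρ : RPath step M N} {ρ' : RPath step M' N'}
    (h : CEq step ρ ρ') : ∀ {P P' : C} {τ : RPath step N P} {τ' : RPath step N' P'},
    CEq step τ τ' → CEq step (ρ.append τ) (ρ'.append τ') := by
  induction h with
  | swap hd s₁ s₂ s₁' s₂' ρ =>
      intro P P' τ τ' hτ
      obtain ⟨-, hP⟩ := ceq_endpoints hτ
      subst hP
      show CEq step (.cons _ _ s₁ (.cons _ _ s₂ (ρ.append τ)))
        (.cons _ _ s₁' (.cons _ _ s₂' (ρ.append τ')))
      exact .trans (.swap hd s₁ s₂ s₁' s₂' (ρ.append τ))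
        (.congr s₁' (.congr s₂' (ceq_append_left ρ hτ)))
  | cancel s s' ρ =>
      intro P P' τ τ' hτ
      show CEq step (.cons _ _ s (.cons _ _ s' (ρ.append τ))) (ρ.append τ')
      exact .trans (.cancel s s' (ρ.append τ)) (ceq_append_left ρ hτ)
  | congr s _ ih =>
      intro P P' τ τ' hτ
      obtain ⟨-, hP⟩ := ceq_endpoints hτ
      subst hP
      show CEq step (.cons _ _ s _) (.cons _ _ s _)
      exact .congr s (ih hτ)
  | refl ρ =>
      intro P P' τ τ' hτ
      exact ceq_append_left ρ hτ
  | symm _ ih =>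
      intro P P' τ τ' hτ
      exact .symm (ih (.symm hτ))
  | trans h1 h2 ih1 ih2 =>
      intro P P' τ τ' hτ
      obtain ⟨h1e, h2e⟩ := ceq_endpoints h1
      subst h1e h2e
      exact .trans (ih1 (.refl τ)) (ih2 hτ)

end Aux

/-- Inversion of traces preserves causal equivalence: if `ρ₁ ≍ ρ₂` then `ρ̄₁ ≍ ρ̄₂`. -/
theorem inv_preserves_ceq (step : C → Finset S → Bool → C → Prop)
    (hLoop : ∀ (M : C) (η : Finset S) (N : C), step M η true N ↔ step N η false M)
    {M N M' N' : C} {ρ₁ : RPath step M N} {ρ₂ : RPath step M' N'}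
    {ρ₁' : RPath step N M} {ρ₂' : RPath step N' M'}
    (h : CEq step ρ₁ ρ₂) (h₁ : IsInv step ρ₁ ρ₁') (h₂ : IsInv step ρ₂ ρ₂') :
    CEq step ρ₁' ρ₂' := by
  induction h with
  | @swap M M₁ M₂ K N η₁ η₂ b₁ b₂ hd s₁ s₂ s₁' s₂' ρ =>
      cases h₁ with
      | cons _ t₁ hinner =>
        cases hinner with
        | cons _ t₂ hσ =>
          cases h₂ with
          | cons _ u₂ hinner' =>
            cases hinner' with
            | cons _ u₁ hσ' =>
              rw [isinv_unique hσ hσ', RPath.append_assoc, RPath.append_assoc]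
              exact ceq_append_left _
                (.swap hd.symm t₂ t₁ (invStep hLoop s₂') (invStep hLoop s₁') (.nil M))
  | @cancel Ma M₁ Na η b s s' ρ =>
      cases h₁ with
      | cons _ t hinner =>
        cases hinner with
        | cons _ t' hσ =>
          rw [isinv_unique hσ h₂, RPath.append_assoc]
          have hc : CEq step
              ((RPath.cons η (!!b) t' (.cons η (!b) t (.nil Ma))) : RPath step Ma Ma)
              (.nil Ma) := by
            have := CEq.cancel (step := step) (b := !!b) t' (by simpa using t) (.nil Ma)
            simpa using this
          have h3 := ceq_append_left ρ₂' hc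
          rw [RPath.append_nil ρ₂'] at h3
          exact h3
  | congr s _ ih =>
      cases h₁ with
      | cons _ t hσ =>
        cases h₂ with
        | cons _ t' hσ' =>
          exact ceq_append (ih hσ hσ') (.refl _)
  | refl ρ =>
      rw [isinv_unique h₁ h₂]
      exact .refl _
  | symm _ ih => exact .symm (ih h₂ h₁)
  | trans h1 _ ih1 ih2 =>
      obtain ⟨σ', hσ'⟩ := exists_inv hLoop _
      exact .trans (ih1 h₁ hσ') (ih2 hσ' h₂)
end
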